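/- With c_i = 1/(i+1) for i = 1, ..., 5 and the coefficients b_1 = 7/18, b_2 = -9, b_3 = 128/3, b_4 = -500/9, b_5 = 45/2, one has \sum_{i=1}^5 b_i c_i^k = 1/(k+1)! for every k = 0, 1, 2, 3, 4; consequently the rational function r(x) = \sum_{i=1}^5 b_i/(1 - c_i x) satisfies r(x) - \varphi_1(x) = O(x^5) as x \to 0. -/

import Mathlib

/-- The entire function `φ₁(x) = ∑ₖ xᵏ / (k+1)!` (equal to `(eˣ - 1)/x` for `x ≠ 0`). -/
noncomputable def phi1R (x : ℝ) : ℝ :=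
  ∑' k : ℕ, x ^ k / ((k + 1).factorial : ℝ)

section Aux

private noncomputable def cvA : Fin 5 → ℝ := ![1/2, 1/3, 1/4, 1/5, 1/6]
private noncomputable def bvA : Fin 5 → ℝ := ![7/18, -9, 128/3, -500/9, 45/2]
private noncomputable def avA (n : ℕ) : ℝ :=
  (∑ i, bvA i * cvA i ^ n) - 1 / ((n + 1).factorial : ℝ)

private lemma cvA_pos (i : Fin 5) : 0 < cvA i := by
  fin_cases i <;> norm_num [cvA]

private lemma cvA_le (i : Fin 5) : cvA i ≤ 1/2 := by
  fin_cases i <;> norm_num [cvA]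

private lemma coeff_eq {k : ℕ} (hk : k ≤ 4) :
    ∑ i, bvA i * cvA i ^ k = 1 / ((k + 1).factorial : ℝ) := by
  interval_cases k <;>
    · simp [Fin.sum_univ_five, bvA, cvA, Nat.factorial]
      norm_num

private lemma avA_zero {k : ℕ} (hk : k ≤ 4) : avA k = 0 := by
  simp [avA, coeff_eq hk]

private lemma abs_avA_le (k : ℕ) : |avA (k + 5)| ≤ 6 := by
  have h1 : |∑ i, bvA i * cvA i ^ (k + 5)| ≤ ∑ i, |bvA i| * cvA i ^ (k + 5) := by
    refine (Finset.abs_sum_le_sum_abs _ _).trans (le_of_eq ?_)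
    refine Finset.sum_congr rfl fun i _ => ?_
    rw [abs_mul, abs_of_nonneg (pow_nonneg (cvA_pos i).le _)]
  have h2 : ∀ i : Fin 5, |bvA i| * cvA i ^ (k + 5) ≤ |bvA i| * (1/2 : ℝ) ^ 5 := by
    intro i
    refine mul_le_mul_of_nonneg_left ?_ (abs_nonneg _)
    calc cvA i ^ (k + 5) ≤ cvA i ^ 5 :=
          pow_le_pow_of_le_one (cvA_pos i).le ((cvA_le i).trans (by norm_num))
            (by omega)
      _ ≤ (1/2 : ℝ) ^ 5 := pow_le_pow_left₀ (cvA_pos i).le (cvA_le i) 5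
  have h3 : (∑ i, |bvA i| * cvA i ^ (k + 5)) ≤ ∑ i : Fin 5, |bvA i| * (1/2 : ℝ) ^ 5 :=
    Finset.sum_le_sum fun i _ => h2 i
  have h4 : (∑ i : Fin 5, |bvA i| * (1/2 : ℝ) ^ 5) ≤ 5 := by
    have e1 : |(7/18 : ℝ)| = 7/18 := abs_of_nonneg (by norm_num)
    have e2 : |(-9 : ℝ)| = 9 := by rw [abs_of_nonpos (by norm_num)]; norm_num
    have e3 : |(128/3 : ℝ)| = 128/3 := abs_of_nonneg (by norm_num)
    have e4 : |(-500/9 : ℝ)| = 500/9 := by rw [abs_of_nonpos (by norm_num)]; norm_num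
    have e5 : |(45/2 : ℝ)| = 45/2 := abs_of_nonneg (by norm_num)
    simp only [Fin.sum_univ_five, bvA, Matrix.cons_val_zero, Matrix.cons_val_one,
      Matrix.head_cons, Matrix.cons_val_two, Matrix.tail_cons, Matrix.cons_val_three,
      Matrix.cons_val_four, e1, e2, e3, e4, e5]
    norm_num
  have h5 : (1 : ℝ) / ((k + 5 + 1).factorial : ℝ) ≤ 1 := by
    rw [div_le_one (by positivity)]
    exact_mod_cast Nat.one_le_iff_ne_zero.2 (Nat.factorial_ne_zero _)
  have h6 : (0 : ℝ) ≤ 1 / ((k + 5 + 1).factorial : ℝ) := by positivity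
  calc |avA (k + 5)| ≤ |∑ i, bvA i * cvA i ^ (k + 5)| + |1 / ((k + 5 + 1).factorial : ℝ)| :=
        abs_sub _ _
    _ ≤ 5 + 1 := by
        refine add_le_add ((h1.trans h3).trans h4) ?_
        rw [abs_of_nonneg h6]; exact h5
    _ = 6 := by norm_num

end Aux

/-- With `cᵢ = 1/(i+1)` for `i = 1, …, 5` and `b = (7/18, -9, 128/3, -500/9, 45/2)`,
the coefficients satisfy `∑ᵢ bᵢ cᵢᵏ = 1/(k+1)!` for `k = 0, …, 4`, and hence
`r(x) = ∑ᵢ bᵢ/(1 - cᵢ x)` approximates `φ₁` to order 4 at the origin. -/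
theorem fractional_phi1_order4_coeffs :
    let c : Fin 5 → ℝ := ![1/2, 1/3, 1/4, 1/5, 1/6]
    let b : Fin 5 → ℝ := ![7/18, -9, 128/3, -500/9, 45/2]
    (∀ k : ℕ, k ≤ 4 → ∑ i, b i * c i ^ k = 1 / ((k + 1).factorial : ℝ)) ∧
      ∃ C > (0 : ℝ), ∃ δ > (0 : ℝ), ∀ x : ℝ, |x| < δ →
        |(∑ i, b i / (1 - c i * x)) - phi1R x| ≤ C * |x| ^ 5 := by
  intro c b
  have hc : c = cvA := rfl
  have hb : b = bvA := rfl
  constructor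
  · intro k hk
    rw [hc, hb]
    exact coeff_eq hk
  refine ⟨12, by norm_num, 1/2, by norm_num, fun x hx => ?_⟩
  rw [hc, hb]
  have hx2 : |x| ≤ 1/2 := hx.le
  -- each |cᵢ x| < 1
  have hcx : ∀ i : Fin 5, ‖cvA i * x‖ < 1 := by
    intro i
    rw [Real.norm_eq_abs, abs_mul, abs_of_nonneg (cvA_pos i).le]
    calc cvA i * |x| ≤ (1/2) * (1/2) := by
          apply mul_le_mul (cvA_le i) hx2 (abs_nonneg x) (by norm_num)
      _ < 1 := by norm_num
  -- summability of geometric pieces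
  have hsumgeo : ∀ i : Fin 5, Summable fun k : ℕ => bvA i * (cvA i * x) ^ k :=
    fun i => (summable_geometric_of_norm_lt_one (hcx i)).mul_left _
  -- r x as a tsum
  have hr : (∑ i, bvA i / (1 - cvA i * x)) = ∑' k : ℕ, (∑ i, bvA i * cvA i ^ k) * x ^ k := by
    have : ∀ i : Fin 5, bvA i / (1 - cvA i * x) = ∑' k : ℕ, bvA i * (cvA i * x) ^ k := by
      intro i
      rw [tsum_mul_left, tsum_geometric_of_norm_lt_one (hcx i), div_eq_mul_inv]
    rw [Finset.sum_congr rfl fun i _ => this i, ← Summable.tsum_finsetSum fun i _ => hsumgeo i]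
    refine tsum_congr fun k => ?_
    rw [Finset.sum_mul]
    exact Finset.sum_congr rfl fun i _ => by ring
  -- summability of the two series
  have hs1 : Summable fun k : ℕ => (∑ i, bvA i * cvA i ^ k) * x ^ k := by
    have hsum' : Summable fun k : ℕ => ∑ i : Fin 5, bvA i * (cvA i * x) ^ k :=
      summable_sum fun i _ => hsumgeo i
    refine hsum'.congr fun k => ?_
    rw [Finset.sum_mul]
    exact Finset.sum_congr rfl fun i _ => by ring
  have hs2 : Summable fun k : ℕ => (1 / ((k + 1).factorial : ℝ)) * x ^ k := by
    refine Summable.of_norm_bounded (g := fun k => |x| ^ k / (k.factorial : ℝ))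
      (Real.summable_pow_div_factorial |x|) fun k => ?_
    rw [Real.norm_eq_abs, abs_mul, abs_pow]
    rw [abs_of_nonneg (by positivity : (0:ℝ) ≤ 1 / ((k + 1).factorial : ℝ))]
    rw [mul_comm, ← div_eq_mul_one_div]
    apply div_le_div_of_nonneg_left (by positivity) (by positivity)
    exact_mod_cast Nat.factorial_le (Nat.le_succ k)
  have hsa : Summable fun k : ℕ => avA k * x ^ k := by
    refine Summable.congr (hs1.sub hs2) fun k => ?_
    simp [avA, sub_mul]
  -- the difference as a tsum
  have hphi : phi1R x = ∑' k : ℕ, (1 / ((k + 1).factorial : ℝ)) * x ^ k := by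
    refine tsum_congr fun k => ?_
    rw [div_eq_mul_inv, one_div, mul_comm]
  have hdiff : (∑ i, bvA i / (1 - cvA i * x)) - phi1R x = ∑' k : ℕ, avA k * x ^ k := by
    rw [hr, hphi, ← Summable.tsum_sub hs1 hs2]
    refine tsum_congr fun k => ?_
    simp [avA, sub_mul]
  -- shift by 5
  have hshift : (∑' k : ℕ, avA k * x ^ k) = ∑' k : ℕ, avA (k + 5) * x ^ (k + 5) := by
    rw [← Summable.sum_add_tsum_nat_add 5 hsa]
    have : (∑ k ∈ Finset.range 5, avA k * x ^ k) = 0 := by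
      refine Finset.sum_eq_zero fun k hk => ?_
      have hk4 : k ≤ 4 := Nat.lt_succ_iff.1 (Finset.mem_range.1 hk)
      rw [avA_zero hk4, zero_mul]
    rw [this, zero_add]
  -- factor out x^5
  have hfact : (∑' k : ℕ, avA (k + 5) * x ^ (k + 5)) =
      (∑' k : ℕ, avA (k + 5) * x ^ k) * x ^ 5 := by
    rw [← tsum_mul_right]
    refine tsum_congr fun k => ?_
    rw [pow_add]; ring
  -- bound the tail sum
  have hbound : ∀ k : ℕ, ‖avA (k + 5) * x ^ k‖ ≤ 6 * (1/2 : ℝ) ^ k := by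
    intro k
    rw [Real.norm_eq_abs, abs_mul, abs_pow]
    exact mul_le_mul (abs_avA_le k) (pow_le_pow_left₀ (abs_nonneg x) hx2 k)
      (by positivity) (by norm_num)
  have hsg : Summable fun k : ℕ => 6 * (1/2 : ℝ) ^ k :=
    (summable_geometric_of_lt_one (by norm_num) (by norm_num)).mul_left 6
  have hst : Summable fun k : ℕ => avA (k + 5) * x ^ k :=
    Summable.of_norm_bounded hsg hbound
  have hnorm : Summable fun k : ℕ => ‖avA (k + 5) * x ^ k‖ :=
    Summable.of_norm_bounded hsg fun k => by rw [norm_norm]; exact hbound k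
  have htail : |∑' k : ℕ, avA (k + 5) * x ^ k| ≤ 12 := by
    rw [← Real.norm_eq_abs]
    refine (norm_tsum_le_tsum_norm hnorm).trans ?_
    have h12 : (∑' k : ℕ, 6 * (1/2 : ℝ) ^ k) = 12 := by
      rw [tsum_mul_left, tsum_geometric_of_lt_one (by norm_num) (by norm_num)]
      norm_num
    rw [← h12]
    exact Summable.tsum_le_tsum hbound hnorm hsg
  calc |(∑ i, bvA i / (1 - cvA i * x)) - phi1R x|
      = |∑' k : ℕ, avA (k + 5) * x ^ k| * |x| ^ 5 := by
        rw [hdiff, hshift, hfact, abs_mul, abs_pow]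
    _ ≤ 12 * |x| ^ 5 := by
        exact mul_le_mul_of_nonneg_right htail (by positivity)
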